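/- Let d ≥ 1, b ≥ d+2, and let h_0, …, h_{d+1} be nonnegative integers with h_i ≤ C(b-d+i-2, i) for all 0 ≤ i ≤ d+1, satisfying the Dehn–Sommerville symmetry h_i = h_{d+1-i}. Then Σ_{j=0}^{d+1} h_j ≤ f_d(CycP_{d+1}(b)) = C(b-⌈(d+1)/2⌉, ⌊(d+1)/2⌋) + C(b-1-⌈d/2⌉, ⌊d/2⌋). -/

import Mathlib

open Finset

lemma hockey_stick_sum (n : ℕ) : ∀ m : ℕ,
    ∑ i ∈ range (m + 1), Nat.choose (n + i) i = Nat.choose (n + m + 1) m := by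
  intro m
  induction m with
  | zero => simp
  | succ k ih =>
    rw [Finset.sum_range_succ, ih,
      show n + (k + 1) + 1 = (n + k + 1) + 1 by omega, Nat.choose_succ_succ,
      show n + (k + 1) = n + k + 1 by omega]

/-- Any palindromic sequence of nonnegative integers bounded entrywise by the
h-vector `C(b-d+i-2, i)` of the cyclic `(d+1)`-polytope with `b` vertices has total
sum at most its facet number
`f_d(CycP_{d+1}(b)) = C(b-⌈(d+1)/2⌉, ⌊(d+1)/2⌋) + C(b-1-⌈d/2⌉, ⌊d/2⌋)`. -/
theorem symmetric_h_vector_sum_le (d b : ℕ) (hd : 1 ≤ d) (hb : d + 2 ≤ b)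
    (h : ℕ → ℤ)
    (hnonneg : ∀ i ≤ d + 1, 0 ≤ h i)
    (hbound : ∀ i ≤ d + 1, h i ≤ (Nat.choose (b - d + i - 2) i : ℤ))
    (hsymm : ∀ i ≤ d + 1, h i = h (d + 1 - i)) :
    ∑ j ∈ range (d + 2), h j ≤
      ((Nat.choose (b - (d + 2) / 2) ((d + 1) / 2)
        + Nat.choose (b - 1 - (d + 1) / 2) (d / 2) : ℕ) : ℤ) := by
  set m := (d + 1) / 2 with hm
  have hmd : m ≤ d := by omega
  set n := b - d - 2 with hn
  -- split the sum
  have split : ∑ j ∈ range (d + 2), h j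
      = ∑ i ∈ range (m + 1), h i + ∑ i ∈ range (d + 1 - m), h (m + 1 + i) := by
    rw [show d + 2 = (m + 1) + (d + 1 - m) by omega, Finset.sum_range_add]
  rw [split]
  have h1 : ∑ i ∈ range (m + 1), h i ≤
      ((∑ i ∈ range (m + 1), Nat.choose (n + i) i : ℕ) : ℤ) := by
    push_cast
    apply Finset.sum_le_sum
    intro i hi
    simp only [Finset.mem_range] at hi
    have := hbound i (by omega)
    rwa [show b - d + i - 2 = n + i by omega] at this
  have h2 : ∑ i ∈ range (d + 1 - m), h (m + 1 + i) ≤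
      ((∑ i ∈ range (d + 1 - m), Nat.choose (n + (d - m - i)) (d - m - i) : ℕ) : ℤ) := by
    push_cast
    apply Finset.sum_le_sum
    intro i hi
    simp only [Finset.mem_range] at hi
    have hs := hsymm (m + 1 + i) (by omega)
    rw [show d + 1 - (m + 1 + i) = d - m - i by omega] at hs
    have := hbound (d - m - i) (by omega)
    rw [show b - d + (d - m - i) - 2 = n + (d - m - i) by omega] at this
    rw [hs]; exact this
  have e1 : ∑ i ∈ range (m + 1), Nat.choose (n + i) i = Nat.choose (n + m + 1) m :=
    hockey_stick_sum n m
  have e2 : ∑ i ∈ range (d + 1 - m), Nat.choose (n + (d - m - i)) (d - m - i)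
      = Nat.choose (n + (d - m) + 1) (d - m) := by
    have := Finset.sum_range_reflect (fun j => Nat.choose (n + j) j) (d + 1 - m)
    rw [show ∑ i ∈ range (d + 1 - m), Nat.choose (n + (d - m - i)) (d - m - i)
        = ∑ i ∈ range (d + 1 - m), Nat.choose (n + (d + 1 - m - 1 - i)) (d + 1 - m - 1 - i) by
      apply Finset.sum_congr rfl; intro i hi
      simp only [Finset.mem_range] at hi
      congr 1 <;> omega]
    rw [this, show d + 1 - m = (d - m) + 1 by omega]
    exact hockey_stick_sum n (d - m)
  have c1 : n + m + 1 = b - (d + 2) / 2 := by omega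
  have c2 : n + (d - m) + 1 = b - 1 - (d + 1) / 2 := by omega
  have c3 : d - m = d / 2 := by omega
  calc ∑ i ∈ range (m + 1), h i + ∑ i ∈ range (d + 1 - m), h (m + 1 + i)
      ≤ ((∑ i ∈ range (m + 1), Nat.choose (n + i) i : ℕ) : ℤ)
        + ((∑ i ∈ range (d + 1 - m), Nat.choose (n + (d - m - i)) (d - m - i) : ℕ) : ℤ) :=
        add_le_add h1 h2
    _ = _ := by rw [e1, e2, c1, c2, c3]; push_cast; ring
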